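/- Let H be a Hilbert space, {ω_k} an orthonormal basis, 0 = λ₁ < λ₂ ≤ λ₃ ≤ ⋯ with λ_k → ∞. Let v₀, v_d ∈ H with ω₁ = v_d/‖v_d‖ and ⟨v₀, v_d⟩ > 0. For ε > 0 define T_ε > 0 by e^{−λ₂ T_ε} = ε ⟨v₀,v_d⟩/(‖v₀‖·‖v_d‖²) and β_ε = (1/T_ε) ln(‖v_d‖²/⟨v₀,v_d⟩). Then the vector v(T_ε) = Σ_k e^{(−λ_k+β_ε)T_ε}⟨v₀,ω_k⟩ω_k satisfies ‖v(T_ε) − v_d‖ ≤ ε. -/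

import Mathlib

open MeasureTheory Real RealInnerProductSpace

/-- Abstract approximate controllability step: with ω₀ = v_d/‖v_d‖, ⟨v₀,v_d⟩ > 0,
    T_ε defined by e^{−λ₁T_ε} = ε⟨v₀,v_d⟩/(‖v₀‖‖v_d‖²) and
    β_ε = (1/T_ε) ln(‖v_d‖²/⟨v₀,v_d⟩), the state
    v(T_ε) = Σ_k e^{(−λ_k+β_ε)T_ε}⟨v₀,ω_k⟩ω_k satisfies ‖v(T_ε) − v_d‖ ≤ ε.
    (Indexing starts from 0, so λ₀ = 0 and λ₁ play the roles of λ₁, λ₂ of the paper.) -/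
theorem approximate_controllability_step
    {H : Type*} [NormedAddCommGroup H] [InnerProductSpace ℝ H] [CompleteSpace H]
    (ω : HilbertBasis ℕ ℝ H) (lam : ℕ → ℝ)
    (hlam0 : lam 0 = 0) (hlam1pos : 0 < lam 1)
    (hmono : ∀ k : ℕ, 1 ≤ k → lam 1 ≤ lam k)
    (v₀ vd : H) (hvd : vd ≠ 0) (hv₀ : v₀ ≠ 0)
    (hω0 : (ω 0 : H) = ‖vd‖⁻¹ • vd)
    (hpos : 0 < ⟪v₀, vd⟫)
    (ε : ℝ) (hε : 0 < ε)
    (hsmall : ε * ⟪v₀, vd⟫ / (‖v₀‖ * ‖vd‖ ^ 2) < 1)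
    (Tε : ℝ) (hTpos : 0 < Tε)
    (hT : Real.exp (-lam 1 * Tε) = ε * ⟪v₀, vd⟫ / (‖v₀‖ * ‖vd‖ ^ 2))
    (βε : ℝ) (hβ : βε = (1 / Tε) * Real.log (‖vd‖ ^ 2 / ⟪v₀, vd⟫)) :
    ‖(∑' k : ℕ, Real.exp ((-lam k + βε) * Tε) • (⟪v₀, ω k⟫ • ω k)) - vd‖ ≤ ε := by
  have hvdn : 0 < ‖vd‖ := norm_pos_iff.mpr hvd
  have hv0n : 0 < ‖v₀‖ := norm_pos_iff.mpr hv₀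
  set f : ℕ → ℝ := fun k => Real.exp ((-lam k + βε) * Tε) * ⟪v₀, ω k⟫ with hfdef
  -- exp(βT)
  have hr : 0 < ‖vd‖ ^ 2 / ⟪v₀, vd⟫ := div_pos (by positivity) hpos
  have hexpβ : Real.exp (βε * Tε) = ‖vd‖ ^ 2 / ⟪v₀, vd⟫ := by
    rw [hβ]
    have h1 : 1 / Tε * Real.log (‖vd‖ ^ 2 / ⟪v₀, vd⟫) * Tε
        = Real.log (‖vd‖ ^ 2 / ⟪v₀, vd⟫) := by
      field_simp
    rw [h1, Real.exp_log hr]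
  have hinner0 : ⟪v₀, (ω 0 : H)⟫ = ‖vd‖⁻¹ * ⟪v₀, vd⟫ := by
    rw [hω0, real_inner_smul_right]
  have hf0 : f 0 = ‖vd‖ := by
    simp only [hfdef, hlam0, neg_zero, zero_add, hexpβ, hinner0]
    field_simp
  set C : ℝ := Real.exp ((-lam 1 + βε) * Tε) with hCdef
  have hCpos : 0 < C := Real.exp_pos _
  have hCε : C * ‖v₀‖ = ε := by
    rw [hCdef, add_mul, Real.exp_add, hT, hexpβ]
    field_simp
  -- bound exp((-lam k + β)T) ≤ exp(βT) for all k
  have hlamnn : ∀ k, 0 ≤ lam k := by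
    intro k
    rcases Nat.eq_zero_or_pos k with hk | hk
    · simp [hk, hlam0]
    · exact le_trans hlam1pos.le (hmono k hk)
  have hexp_le : ∀ k, Real.exp ((-lam k + βε) * Tε) ≤ Real.exp (βε * Tε) := by
    intro k
    apply Real.exp_le_exp.mpr
    apply mul_le_mul_of_nonneg_right _ hTpos.le
    linarith [hlamnn k]
  -- summability of the coefficients squared
  have hsum0 : Summable fun k => ⟪v₀, (ω k : H)⟫ * ⟪(ω k : H), v₀⟫ :=
    ω.summable_inner_mul_inner v₀ v₀
  have hsumsq : Summable fun k => ⟪v₀, (ω k : H)⟫ ^ 2 := by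
    convert hsum0 using 2 with k
    rw [sq, real_inner_comm v₀ (ω k)]
  -- f ∈ ℓ²
  have hmem : Memℓp f 2 := by
    apply memℓp_gen
    have hS : Summable fun k => ‖f k‖ ^ 2 := by
      apply Summable.of_nonneg_of_le (fun k => by positivity) _
        (hsumsq.mul_left (Real.exp (βε * Tε) ^ 2))
      intro k
      have h1 : ‖f k‖ ^ 2 = Real.exp ((-lam k + βε) * Tε) ^ 2 * ⟪v₀, (ω k : H)⟫ ^ 2 := by
        simp [hfdef, norm_mul, mul_pow, sq_abs, Real.norm_eq_abs]
      rw [h1]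
      exact mul_le_mul_of_nonneg_right
        (pow_le_pow_left₀ (Real.exp_pos _).le (hexp_le k) 2) (sq_nonneg _)
    have h2 : (fun k => ‖f k‖ ^ ENNReal.toReal 2) = fun k => ‖f k‖ ^ 2 := by
      funext k
      rw [ENNReal.toReal_ofNat, show ((2:ℝ)) = ((2:ℕ):ℝ) by norm_num, Real.rpow_natCast]
    rw [h2]
    exact hS
  -- identify the tsum
  set x : H := ω.repr.symm ⟨f, hmem⟩ with hxdef
  have hxsum : HasSum (fun k => f k • (ω k : H)) x := ω.hasSum_repr_symm ⟨f, hmem⟩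
  have htsum : (∑' k : ℕ, Real.exp ((-lam k + βε) * Tε) • (⟪v₀, (ω k : H)⟫ • ω k)) = x := by
    rw [← hxsum.tsum_eq]
    congr 1 with k
    rw [hfdef, smul_smul]
  rw [htsum]
  -- coefficients of x
  have hxcoef : ∀ j, ⟪(ω j : H), x⟫ = f j := by
    intro j
    rw [← ω.repr_apply_apply, hxdef, LinearIsometryEquiv.apply_symm_apply]
  -- coefficients of vd
  have hvd' : vd = ‖vd‖ • (ω 0 : H) := by
    rw [hω0, smul_smul, mul_inv_cancel₀ hvdn.ne', one_smul]
  have hvdcoef : ∀ j, ⟪(ω j : H), vd⟫ = if j = 0 then ‖vd‖ else 0 := by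
    intro j
    conv_lhs => rw [hvd']
    rw [real_inner_smul_right]
    have := ω.orthonormal
    rw [orthonormal_iff_ite] at this
    rw [this j 0]
    by_cases hj : j = 0 <;> simp [hj]
  -- coefficients of x - vd
  have hcoef : ∀ j, ⟪x - vd, (ω j : H)⟫ = if j = 0 then 0 else f j := by
    intro j
    rw [real_inner_comm, inner_sub_right, hxcoef, hvdcoef]
    by_cases hj : j = 0 <;> simp [hj, hf0]
  -- Parseval
  have hpars : HasSum (fun j => ⟪x - vd, (ω j : H)⟫ * ⟪(ω j : H), x - vd⟫) ⟪x - vd, x - vd⟫ :=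
    ω.hasSum_inner_mul_inner (x - vd) (x - vd)
  have hnormsq : ‖x - vd‖ ^ 2 = ∑' j, ⟪x - vd, (ω j : H)⟫ ^ 2 := by
    rw [← real_inner_self_eq_norm_sq, ← hpars.tsum_eq]
    congr 1 with j
    rw [sq, real_inner_comm (x - vd) (ω j)]
  -- bound the tail
  have hterm : ∀ j, ⟪x - vd, (ω j : H)⟫ ^ 2 ≤ C ^ 2 * ⟪v₀, (ω j : H)⟫ ^ 2 := by
    intro j
    rw [hcoef j]
    by_cases hj : j = 0
    · simp [hj]; positivity
    · simp only [hj, if_false, hfdef, mul_pow]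
      apply mul_le_mul_of_nonneg_right _ (sq_nonneg _)
      apply pow_le_pow_left₀ (Real.exp_pos _).le _ 2
      apply Real.exp_le_exp.mpr
      apply mul_le_mul_of_nonneg_right _ hTpos.le
      have := hmono j (Nat.one_le_iff_ne_zero.mpr hj)
      linarith
  have hsumL : Summable fun j => ⟪x - vd, (ω j : H)⟫ ^ 2 := by
    have : Summable fun j => ⟪x - vd, (ω j : H)⟫ * ⟪(ω j : H), x - vd⟫ :=
      ω.summable_inner_mul_inner (x - vd) (x - vd)
    convert this using 2 with j
    rw [sq, real_inner_comm (x - vd) (ω j)]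
  have hbound : ‖x - vd‖ ^ 2 ≤ C ^ 2 * ‖v₀‖ ^ 2 := by
    rw [hnormsq]
    calc ∑' j, ⟪x - vd, (ω j : H)⟫ ^ 2
        ≤ ∑' j, C ^ 2 * ⟪v₀, (ω j : H)⟫ ^ 2 :=
          Summable.tsum_le_tsum hterm hsumL (hsumsq.mul_left _)
      _ = C ^ 2 * ∑' j, ⟪v₀, (ω j : H)⟫ ^ 2 := tsum_mul_left
      _ = C ^ 2 * ‖v₀‖ ^ 2 := by
          congr 1
          rw [← real_inner_self_eq_norm_sq, ← (ω.hasSum_inner_mul_inner v₀ v₀).tsum_eq]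
          congr 1 with j
          rw [sq, real_inner_comm v₀ (ω j)]
  have : ‖x - vd‖ ^ 2 ≤ ε ^ 2 := by
    rw [← hCε, mul_pow] at *
    exact hbound
  nlinarith [norm_nonneg (x - vd), hε.le]
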